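/- arXiv:2506.07716 — 9 statements merged into one kernel-verified Lean document; each statement's English description precedes it below -/
import Mathlib

section
/- For all real v > 1 and γ > 1, the function ψ(v,γ) = (γ-1)v^{γ+1} - (γ+1)v^{γ-1} + 2 is strictly positive. -/
theorem psi_pos_of_gt_one (v γ : ℝ) (hv : 1 < v) (hγ : 1 < γ) :
    0 < (γ - 1) * v ^ (γ + 1) - (γ + 1) * v ^ (γ - 1) + 2 := by
  set f : ℝ → ℝ := fun x => (γ - 1) * x ^ (γ + 1) - (γ + 1) * x ^ (γ - 1) + 2 with hf
  have hd : ∀ x ∈ Set.Ioi (1 : ℝ), HasDerivAt f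
      ((γ - 1) * ((γ + 1) * x ^ γ) - (γ + 1) * ((γ - 1) * x ^ (γ - 2))) x := by
    intro x hx
    have hx0 : x ≠ 0 := by
      have : (1:ℝ) < x := hx
      linarith
    have h1 : HasDerivAt (fun y : ℝ => y ^ (γ + 1)) ((γ + 1) * x ^ (γ + 1 - 1)) x :=
      Real.hasDerivAt_rpow_const (Or.inl hx0)
    have h2 : HasDerivAt (fun y : ℝ => y ^ (γ - 1)) ((γ - 1) * x ^ (γ - 1 - 1)) x :=
      Real.hasDerivAt_rpow_const (Or.inl hx0)
    have : HasDerivAt f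
        ((γ - 1) * ((γ + 1) * x ^ (γ + 1 - 1)) - (γ + 1) * ((γ - 1) * x ^ (γ - 1 - 1))) x :=
      ((h1.const_mul (γ - 1)).sub (h2.const_mul (γ + 1))).add_const 2
    simpa [show γ + 1 - 1 = γ by ring, show γ - 1 - 1 = γ - 2 by ring] using this
  have hcont : ContinuousOn f (Set.Ici 1) := by
    intro x hx
    have hx0 : x ≠ 0 := by
      have : (1:ℝ) ≤ x := hx
      linarith
    exact (((Real.continuousAt_rpow_const x _ (Or.inl hx0)).const_smul (γ - 1)).sub
      ((Real.continuousAt_rpow_const x _ (Or.inl hx0)).const_smul (γ + 1))).add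
      continuousAt_const |>.continuousWithinAt
  have hmono : StrictMonoOn f (Set.Ici 1) := by
    apply strictMonoOn_of_deriv_pos (convex_Ici 1) hcont
    intro x hx
    rw [interior_Ici] at hx
    rw [(hd x hx).deriv]
    have hx1 : (1:ℝ) < x := hx
    have hlt : x ^ (γ - 2) < x ^ γ := by
      apply Real.rpow_lt_rpow_left_iff hx1 |>.mpr
      linarith
    have hγ1 : 0 < γ - 1 := by linarith
    have hγ2 : 0 < γ + 1 := by linarith
    nlinarith [mul_pos (mul_pos hγ1 hγ2) (sub_pos.mpr hlt)]
  have h1 : f 1 = 0 := by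
    simp [hf]
    ring
  have := hmono (Set.self_mem_Ici) (Set.mem_Ici.mpr hv.le) hv
  rw [h1] at this
  simpa [hf] using this
end

section
/- For all real v with 0 < v < 1 and γ < -1, the function ψ(v,γ) = (γ-1)v^{γ+1} - (γ+1)v^{γ-1} + 2 is strictly positive. -/
theorem psi_pos_of_lt_neg_one (v γ : ℝ) (hv0 : 0 < v) (hv1 : v < 1) (hγ : γ < -1) :
    0 < (γ - 1) * v ^ (γ + 1) - (γ + 1) * v ^ (γ - 1) + 2 := by
  set f : ℝ → ℝ := fun x => (γ - 1) * x ^ (γ + 1) - (γ + 1) * x ^ (γ - 1) + 2 with hf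
  have hanti : StrictAntiOn f (Set.Ioc 0 1) := by
    apply strictAntiOn_of_deriv_neg (convex_Ioc 0 1)
    · apply ContinuousOn.add
      apply ContinuousOn.sub
      · exact continuousOn_const.mul (fun x hx =>
          (Real.continuousAt_rpow_const x _ (Or.inl (ne_of_gt hx.1))).continuousWithinAt)
      · exact continuousOn_const.mul (fun x hx =>
          (Real.continuousAt_rpow_const x _ (Or.inl (ne_of_gt hx.1))).continuousWithinAt)
      · exact continuousOn_const
    · intro x hx
      rw [interior_Ioc] at hx
      obtain ⟨hx0, hx1⟩ := hx
      have h1 : HasDerivAt f ((γ - 1) * ((γ + 1) * x ^ (γ + 1 - 1)) -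
          (γ + 1) * ((γ - 1) * x ^ (γ - 1 - 1))) x := by
        have ha := (Real.hasDerivAt_rpow_const (x := x) (p := γ + 1) (Or.inl (ne_of_gt hx0)))
        have hb := (Real.hasDerivAt_rpow_const (x := x) (p := γ - 1) (Or.inl (ne_of_gt hx0)))
        exact (((ha.const_mul (γ - 1)).sub (hb.const_mul (γ + 1))).add_const 2)
      rw [h1.deriv]
      have hlt : x ^ (γ + 1 - 1) < x ^ (γ - 1 - 1) :=
        Real.rpow_lt_rpow_of_exponent_gt hx0 hx1 (by linarith)
      have hpos : 0 < (γ - 1) * (γ + 1) := mul_pos_of_neg_of_neg (by linarith) (by linarith)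
      nlinarith [hlt, hpos, mul_pos hpos (sub_pos.mpr hlt)]
  have h1 : f 1 = 0 := by
    simp [hf, Real.one_rpow]
    ring
  have := hanti ⟨hv0, le_of_lt hv1⟩ ⟨zero_lt_one, le_refl 1⟩ hv1
  rw [h1] at this
  exact this
end

section
/- For all real v > 1 and γ > 1, F_d(v,γ) = γ·v² - 2·v^{γ+1} + v² - γ + 1 is strictly negative. -/
theorem Fd_neg (v γ : ℝ) (hv : 1 < v) (hγ : 1 < γ) :
    γ * v ^ 2 - 2 * v ^ (γ + 1) + v ^ 2 - γ + 1 < 0 := by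
  have hv0 : 0 < v := by linarith
  set L := Real.log v with hLdef
  have hL : 0 < L := Real.log_pos hv
  have key : v ^ (γ + 1) = v ^ 2 * Real.exp ((γ - 1) * L) := by
    rw [Real.rpow_def_of_pos hv0,
      show Real.log v * (γ + 1) = (γ - 1) * L + (L + L) by rw [hLdef]; ring, Real.exp_add, Real.exp_add,
      Real.exp_log hv0]
    ring
  have h1 : 1 + (γ - 1) * L < Real.exp ((γ - 1) * L) := by
    have := Real.add_one_lt_exp (x := (γ - 1) * L) (ne_of_gt (mul_pos (by linarith) hL))
    linarith
  have h2 : v - 1 ≤ v * L := by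
    have h := Real.log_le_sub_one_of_pos (x := v⁻¹) (by positivity)
    rw [Real.log_inv] at h
    have := mul_le_mul_of_nonneg_left h (le_of_lt hv0)
    have hvinv : v * v⁻¹ = 1 := mul_inv_cancel₀ (ne_of_gt hv0)
    nlinarith
  rw [key]
  nlinarith [mul_lt_mul_of_pos_left h1 (show (0:ℝ) < 2 * v ^ 2 by positivity),
    mul_le_mul_of_nonneg_left h2 (show (0:ℝ) ≤ 2 * v * (γ - 1) by nlinarith),
    sq_nonneg (v - 1), mul_pos (sub_pos.2 hγ) (mul_pos (sub_pos.2 hv) (sub_pos.2 hv))]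
end

section
/- For all real v > 1 and γ > 1, f(v,γ) = v^{2γ} + γ·v^{γ-1} - 1 - γ·v^{γ+1} is strictly positive. -/
open Real

lemma sinh_lemma (γ : ℝ) (hγ : 1 < γ) : ∀ x > 0, γ * Real.sinh x < Real.sinh (γ * x) := by
  have hmono : StrictMonoOn (fun x => Real.sinh (γ * x) - γ * Real.sinh x) (Set.Ici 0) := by
    apply strictMonoOn_of_deriv_pos (convex_Ici 0)
    · fun_prop
    · intro x hx
      rw [interior_Ici] at hx
      have hx0 : 0 < x := hx
      have : deriv (fun x => Real.sinh (γ * x) - γ * Real.sinh x) x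
          = γ * Real.cosh (γ * x) - γ * Real.cosh x := by
        have h1 : HasDerivAt (fun x => Real.sinh (γ * x)) (Real.cosh (γ * x) * γ) x := by
          have := (Real.hasDerivAt_sinh (γ * x)).comp x ((hasDerivAt_id x).const_mul γ)
          simp only [mul_one] at this
          exact this
        have h2 : HasDerivAt (fun x => γ * Real.sinh x) (γ * Real.cosh x) x :=
          (Real.hasDerivAt_sinh x).const_mul γ
        have := (h1.sub h2).deriv
        exact this.trans (by ring)
      rw [this]
      have hcos : Real.cosh x < Real.cosh (γ * x) := by
        apply Real.cosh_lt_cosh.mpr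
        rw [abs_of_pos hx0, abs_of_pos (by positivity)]
        nlinarith
      nlinarith
  intro x hx
  have := hmono (Set.self_mem_Ici) (le_of_lt hx : (0:ℝ) ≤ x) hx
  simpa using this

theorem f_pos (v γ : ℝ) (hv : 1 < v) (hγ : 1 < γ) :
    0 < v ^ (2 * γ) + γ * v ^ (γ - 1) - 1 - γ * v ^ (γ + 1) := by
  have hv0 : 0 < v := by linarith
  set x := Real.log v with hxdef
  have hx : 0 < x := Real.log_pos hv
  have hr : ∀ y : ℝ, v ^ y = Real.exp (x * y) := fun y => by
    rw [Real.rpow_def_of_pos hv0]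
  rw [hr, hr, hr]
  have h := sinh_lemma γ hγ x hx
  rw [Real.sinh_eq, Real.sinh_eq] at h
  have hB : 0 < Real.exp (γ * x) := Real.exp_pos _
  have hA : 0 < Real.exp x := Real.exp_pos _
  have e1 : Real.exp (x * (2 * γ)) = Real.exp (γ * x) * Real.exp (γ * x) := by
    rw [← Real.exp_add]; ring_nf
  have e2 : Real.exp (x * (γ - 1)) = Real.exp (γ * x) * Real.exp (-x) := by
    rw [← Real.exp_add]; ring_nf
  have e3 : Real.exp (x * (γ + 1)) = Real.exp (γ * x) * Real.exp x := by
    rw [← Real.exp_add]; ring_nf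
  have e4 : Real.exp (-(γ * x)) * Real.exp (γ * x) = 1 := by
    rw [← Real.exp_add]; simp
  have e5 : Real.exp (-x) * Real.exp x = 1 := by
    rw [← Real.exp_add]; simp
  rw [e1, e2, e3]
  nlinarith [mul_lt_mul_of_pos_right h hB, e4, e5]
end

section
/- For all real v with 0 < v < 1 and γ < -1, the quantity F_2(v,γ) = γ·v² - 2·v^{γ+1} + v² - γ + 1 is strictly negative. -/
theorem F2_neg (v γ : ℝ) (hv0 : 0 < v) (hv1 : v < 1) (hγ : γ < -1) :
    γ * v ^ 2 - 2 * v ^ (γ + 1) + v ^ 2 - γ + 1 < 0 := by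
  have hdef : v ^ (γ + 1) = Real.exp (Real.log v * (γ + 1)) :=
    Real.rpow_def_of_pos hv0 _
  have hlog : Real.log v < v - 1 := Real.log_lt_sub_one_of_pos hv0 (ne_of_lt hv1)
  have hγ1 : γ + 1 < 0 := by linarith
  have h2 : (v - 1) * (γ + 1) < Real.log v * (γ + 1) := by nlinarith
  have h3 : 1 + (v - 1) * (γ + 1) < v ^ (γ + 1) := by
    calc 1 + (v - 1) * (γ + 1) ≤ Real.exp ((v - 1) * (γ + 1)) := by
          have := Real.add_one_le_exp ((v - 1) * (γ + 1)); linarith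
      _ < Real.exp (Real.log v * (γ + 1)) := Real.exp_lt_exp.mpr h2
      _ = v ^ (γ + 1) := hdef.symm
  nlinarith [sq_nonneg (v - 1)]
end

section
/- For all real v with 0 < v < 1 and γ < -1, the quantity F_1(v,γ) = ((γ-1)v² - γ - 1)·v^{2γ} + (γ+1)v² - γ + 1 is strictly positive. -/
open Real

private lemma k_neg (t x : ℝ) (ht : 1 < t) (hx0 : 0 < x) (hx1 : x < 1) :
    t * x ^ (t - 1) - (t - 1) * x ^ t - 1 < 0 := by
  set k : ℝ → ℝ := fun y => t * y ^ (t - 1) - (t - 1) * y ^ t - 1 with hk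
  have hmono : StrictMonoOn k (Set.Icc x 1) := by
    apply strictMonoOn_of_deriv_pos (convex_Icc x 1)
    · apply ContinuousOn.sub
      apply ContinuousOn.sub
      · exact ContinuousOn.mul continuousOn_const (fun y hy =>
          (Real.continuousAt_rpow_const y (t - 1) (Or.inl (ne_of_gt (lt_of_lt_of_le hx0 hy.1)))).continuousWithinAt)
      · exact ContinuousOn.mul continuousOn_const (fun y hy =>
          (Real.continuousAt_rpow_const y t (Or.inl (ne_of_gt (lt_of_lt_of_le hx0 hy.1)))).continuousWithinAt)
      · exact continuousOn_const
    · intro y hy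
      rw [interior_Icc] at hy
      have hy0 : 0 < y := lt_trans hx0 hy.1
      have hd : HasDerivAt k
          (t * ((t - 1) * y ^ (t - 1 - 1)) - (t - 1) * (t * y ^ (t - 1))) y := by
        exact (((Real.hasDerivAt_rpow_const (p := t - 1) (Or.inl hy0.ne')).const_mul t).sub
          ((Real.hasDerivAt_rpow_const (p := t) (Or.inl hy0.ne')).const_mul (t - 1))).sub_const 1
      rw [hd.deriv]
      have h1 : y ^ (t - 1) = y ^ (t - 1 - 1) * y := by
        rw [← Real.rpow_add_one hy0.ne' (t - 1 - 1)]; ring_nf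
      have hpow : 0 < y ^ (t - 1 - 1) := Real.rpow_pos_of_pos hy0 _
      have hfac : t * ((t - 1) * y ^ (t - 1 - 1)) - (t - 1) * (t * y ^ (t - 1))
          = t * (t - 1) * y ^ (t - 1 - 1) * (1 - y) := by rw [h1]; ring
      rw [hfac]
      exact mul_pos (mul_pos (mul_pos (by linarith) (by linarith)) hpow) (by linarith [hy.2])
  have := hmono (Set.left_mem_Icc.2 (le_of_lt hx1)) (Set.right_mem_Icc.2 (le_of_lt hx1)) hx1
  simpa [hk, Real.one_rpow] using this

private lemma h_pos (t x : ℝ) (ht : 1 < t) (hx0 : 0 < x) (hx1 : x < 1) :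
    0 < (t - 1) - (t + 1) * x + ((1 - t) * x + (t + 1)) * x ^ t := by
  set h : ℝ → ℝ := fun y => (t - 1) - (t + 1) * y + ((1 - t) * y + (t + 1)) * y ^ t with hh
  have hanti : StrictAntiOn h (Set.Icc x 1) := by
    apply strictAntiOn_of_deriv_neg (convex_Icc x 1)
    · apply ContinuousOn.add
      · exact (continuousOn_const.sub (continuousOn_const.mul continuousOn_id))
      · exact ContinuousOn.mul
          ((continuousOn_const.mul continuousOn_id).add continuousOn_const)
          (fun y hy => (Real.continuousAt_rpow_const y t
            (Or.inl (ne_of_gt (lt_of_lt_of_le hx0 hy.1)))).continuousWithinAt)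
    · intro y hy
      rw [interior_Icc] at hy
      have hy0 : 0 < y := lt_trans hx0 hy.1
      have hd : HasDerivAt h
          (-(t + 1) + ((1 - t) * y ^ t + ((1 - t) * y + (t + 1)) * (t * y ^ (t - 1)))) y := by
        have h1 : HasDerivAt (fun y : ℝ => (t - 1) - (t + 1) * y) (-(t + 1)) y := by
          simpa using ((hasDerivAt_id y).const_mul (t + 1)).const_sub (t - 1)
        have h2 : HasDerivAt (fun y : ℝ => ((1 - t) * y + (t + 1)) * y ^ t)
            ((1 - t) * y ^ t + ((1 - t) * y + (t + 1)) * (t * y ^ (t - 1))) y := by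
          have ha : HasDerivAt (fun y : ℝ => (1 - t) * y + (t + 1)) (1 - t) y := by
            simpa using ((hasDerivAt_id y).const_mul (1 - t)).add_const (t + 1)
          have hb : HasDerivAt (fun y : ℝ => y ^ t) (t * y ^ (t - 1)) y :=
            Real.hasDerivAt_rpow_const (Or.inl hy0.ne')
          simpa [mul_comm, mul_assoc, mul_left_comm] using ha.fun_mul hb
        simpa using h1.fun_add h2
      rw [hd.deriv]
      have hk := k_neg t y ht hy0 hy.2
      have hyt : y ^ t = y ^ (t - 1) * y := by
        rw [← Real.rpow_add_one hy0.ne' (t - 1)]; ring_nf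
      have hpow : 0 < y ^ (t - 1) := Real.rpow_pos_of_pos hy0 _
      rw [hyt] at hk ⊢
      nlinarith [hk, hpow, ht]
  have := hanti (Set.left_mem_Icc.2 (le_of_lt hx1)) (Set.right_mem_Icc.2 (le_of_lt hx1)) hx1
  have h1 : h 1 = 0 := by simp [hh, Real.one_rpow]
  rw [h1] at this
  simpa [hh] using this

theorem F1_pos (v γ : ℝ) (hv0 : 0 < v) (hv1 : v < 1) (hγ : γ < -1) :
    0 < ((γ - 1) * v ^ (2 : ℕ) - γ - 1) * v ^ (2 * γ) + (γ + 1) * v ^ (2 : ℕ) - γ + 1 := by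
  set t : ℝ := -γ with htdef
  have ht : 1 < t := by simp [htdef]; linarith
  set w : ℝ := v ^ (2 : ℕ) with hwdef
  have hw0 : 0 < w := by positivity
  have hw1 : w < 1 := by
    have : v ^ (2 : ℕ) < 1 := pow_lt_one₀ hv0.le hv1 (by norm_num)
    simpa [hwdef] using this
  have hwt : 0 < w ^ t := Real.rpow_pos_of_pos hw0 t
  have key := h_pos t w ht hw0 hw1
  -- rewrite v ^ (2γ) as (w ^ t)⁻¹
  have hvw : v ^ (2 * γ) = (w ^ t)⁻¹ := by
    rw [Real.rpow_mul hv0.le, hwdef]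
    rw [show ((v : ℝ) ^ (2 : ℝ)) = v ^ (2 : ℕ) by
      rw [← Real.rpow_natCast v 2]; norm_num]
    rw [show γ = -t by simp [htdef], Real.rpow_neg (by positivity)]
  rw [hvw]
  have hγt : γ = -t := by simp [htdef]
  rw [hγt]
  have expand : ((-t - 1) * w - (-t) - 1) * (w ^ t)⁻¹ + (-t + 1) * w - (-t) + 1 =
      ((t - 1) - (t + 1) * w + ((1 - t) * w + (t + 1)) * w ^ t) * (w ^ t)⁻¹ := by
    field_simp
    ring
  calc (0 : ℝ) < ((t - 1) - (t + 1) * w + ((1 - t) * w + (t + 1)) * w ^ t) * (w ^ t)⁻¹ :=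
        mul_pos key (inv_pos.2 hwt)
    _ = ((-t - 1) * w - (-t) - 1) * (w ^ t)⁻¹ + (-t + 1) * w - (-t) + 1 := expand.symm
end

section
/- For all real v with 0 < v < 1 and γ < -1, the third partial derivative with respect to v of F_1(v,γ) = ((γ-1)v² - γ - 1)·v^{2γ} + (γ+1)v² - γ + 1 equals 4γ(γ²-1)·v^{2γ-3}·(2γ(v²-1) + v² + 1), and this expression is strictly negative. -/
theorem F1_third_deriv (γ : ℝ) (hγ : γ < -1) :
    ∀ v : ℝ, 0 < v → v < 1 →
      iteratedDeriv 3
        (fun w : ℝ => ((γ - 1) * w ^ (2 : ℕ) - γ - 1) * w ^ (2 * γ) + (γ + 1) * w ^ (2 : ℕ) - γ + 1) v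
        = 4 * γ * (γ ^ 2 - 1) * v ^ (2 * γ - 3) * (2 * γ * (v ^ 2 - 1) + v ^ 2 + 1) ∧
      4 * γ * (γ ^ 2 - 1) * v ^ (2 * γ - 3) * (2 * γ * (v ^ 2 - 1) + v ^ 2 + 1) < 0 := by
  intro v hv hv1
  set F : ℝ → ℝ := fun w : ℝ =>
    ((γ - 1) * w ^ (2 : ℕ) - γ - 1) * w ^ (2 * γ) + (γ + 1) * w ^ (2 : ℕ) - γ + 1 with hF
  set G0 : ℝ → ℝ := fun w =>
    (γ - 1) * w ^ (2 * γ + 2) - (γ + 1) * w ^ (2 * γ) + (γ + 1) * w ^ (2 : ℕ) - γ + 1 with hG0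
  set G1 : ℝ → ℝ := fun w =>
    (γ - 1) * (2 * γ + 2) * w ^ (2 * γ + 1) - (γ + 1) * (2 * γ) * w ^ (2 * γ - 1)
      + 2 * (γ + 1) * w with hG1
  set G2 : ℝ → ℝ := fun w =>
    (γ - 1) * (2 * γ + 2) * (2 * γ + 1) * w ^ (2 * γ)
      - (γ + 1) * (2 * γ) * (2 * γ - 1) * w ^ (2 * γ - 2) + 2 * (γ + 1) with hG2
  set G3 : ℝ → ℝ := fun w =>
    (γ - 1) * (2 * γ + 2) * (2 * γ + 1) * (2 * γ) * w ^ (2 * γ - 1)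
      - (γ + 1) * (2 * γ) * (2 * γ - 1) * (2 * γ - 2) * w ^ (2 * γ - 3) with hG3
  have hS : IsOpen (Set.Ioi (0 : ℝ)) := isOpen_Ioi
  have hvS : v ∈ Set.Ioi (0 : ℝ) := hv
  -- F = G0 on Ioi 0
  have hFG0 : Set.EqOn F G0 (Set.Ioi 0) := by
    intro w hw
    have hw0 : (0 : ℝ) < w := hw
    have hm : w ^ (2 * γ + 2) = w ^ (2 * γ) * w ^ (2 : ℕ) := by
      rw [← Real.rpow_natCast w 2, ← Real.rpow_add hw0]
      norm_num
    simp only [hF, hG0, hm]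
    ring
  -- derivatives
  have hd0 : ∀ w ∈ Set.Ioi (0 : ℝ), HasDerivAt G0 (G1 w) w := by
    intro w hw
    have hw0 : (0 : ℝ) < w := hw
    have h1 := Real.hasDerivAt_rpow_const (p := 2 * γ + 2) (Or.inl hw0.ne')
    have h2 := Real.hasDerivAt_rpow_const (p := 2 * γ) (Or.inl hw0.ne')
    have h3 := hasDerivAt_pow 2 w
    have H := ((((h1.const_mul (γ - 1)).sub (h2.const_mul (γ + 1))).add
      (h3.const_mul (γ + 1))).sub_const γ).add_const 1
    refine H.congr_deriv ?_
    rw [show 2 * γ + 2 - 1 = 2 * γ + 1 from by ring]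
    push_cast
    ring
  have hd1 : ∀ w ∈ Set.Ioi (0 : ℝ), HasDerivAt G1 (G2 w) w := by
    intro w hw
    have hw0 : (0 : ℝ) < w := hw
    have h1 := Real.hasDerivAt_rpow_const (p := 2 * γ + 1) (Or.inl hw0.ne')
    have h2 := Real.hasDerivAt_rpow_const (p := 2 * γ - 1) (Or.inl hw0.ne')
    have H := ((h1.const_mul ((γ - 1) * (2 * γ + 2))).sub
      (h2.const_mul ((γ + 1) * (2 * γ)))).add ((hasDerivAt_id w).const_mul (2 * (γ + 1)))
    refine H.congr_deriv ?_
    rw [show 2 * γ + 1 - 1 = 2 * γ from by ring,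
      show 2 * γ - 1 - 1 = 2 * γ - 2 from by ring]
    ring
  have hd2 : ∀ w ∈ Set.Ioi (0 : ℝ), HasDerivAt G2 (G3 w) w := by
    intro w hw
    have hw0 : (0 : ℝ) < w := hw
    have h1 := Real.hasDerivAt_rpow_const (p := 2 * γ) (Or.inl hw0.ne')
    have h2 := Real.hasDerivAt_rpow_const (p := 2 * γ - 2) (Or.inl hw0.ne')
    have H := (((h1.const_mul ((γ - 1) * (2 * γ + 2) * (2 * γ + 1))).sub
      (h2.const_mul ((γ + 1) * (2 * γ) * (2 * γ - 1)))).add_const (2 * (γ + 1)))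
    refine H.congr_deriv ?_
    rw [show 2 * γ - 1 = 2 * γ - 1 from rfl, show 2 * γ - 2 - 1 = 2 * γ - 3 from by ring]
    ring
  -- transfer derivatives
  have h01 : Set.EqOn (deriv F) G1 (Set.Ioi 0) := by
    intro w hw
    have e : F =ᶠ[nhds w] G0 := Filter.eventuallyEq_of_mem (hS.mem_nhds hw) hFG0
    rw [e.deriv_eq]
    exact (hd0 w hw).deriv
  have h12 : Set.EqOn (deriv (deriv F)) G2 (Set.Ioi 0) := by
    intro w hw
    have e : deriv F =ᶠ[nhds w] G1 := Filter.eventuallyEq_of_mem (hS.mem_nhds hw) h01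
    rw [e.deriv_eq]
    exact (hd1 w hw).deriv
  have h3 : iteratedDeriv 3 F v = G3 v := by
    rw [show (3 : ℕ) = 2 + 1 from rfl, iteratedDeriv_succ,
      show (2 : ℕ) = 1 + 1 from rfl, iteratedDeriv_succ, iteratedDeriv_one]
    have e : deriv (deriv F) =ᶠ[nhds v] G2 := Filter.eventuallyEq_of_mem (hS.mem_nhds hvS) h12
    rw [e.deriv_eq]
    exact (hd2 v hvS).deriv
  have key : G3 v = 4 * γ * (γ ^ 2 - 1) * v ^ (2 * γ - 3) * (2 * γ * (v ^ 2 - 1) + v ^ 2 + 1) := by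
    simp only [hG3]
    rw [show 2 * γ - 1 = (2 * γ - 3) + 2 from by ring, Real.rpow_add hv,
      show ((2 : ℝ)) = ((2 : ℕ) : ℝ) from by norm_num, Real.rpow_natCast]
    ring
  refine ⟨h3.trans key, ?_⟩
  have hP : (0 : ℝ) < v ^ (2 * γ - 3) := Real.rpow_pos_of_pos hv _
  have hA : 4 * γ * (γ ^ 2 - 1) < 0 := by nlinarith
  have hQ : 0 < 2 * γ * (v ^ 2 - 1) + v ^ 2 + 1 := by nlinarith [mul_pos (show (0:ℝ) < -γ - 1 by linarith) (show (0:ℝ) < 1 - v ^ 2 by nlinarith)]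
  exact mul_neg_of_neg_of_pos (mul_neg_of_neg_of_pos hA hP) hQ
end

section
/- The polynomial p(u) = 17u¹⁰ - 227u⁹ - 71526u⁸ - 610029u⁷ - 1615317u⁶ + 4554960u⁵ - 1615317u⁴ - 610029u³ - 71526u² - 227u + 17 has exactly one real root in the interval (1, ∞); moreover p is negative on (1, u*) and positive on (u*, ∞), where u* is that root. -/
private noncomputable def Pfun : ℝ → ℝ := fun u =>
  17 * u ^ 10 - 227 * u ^ 9 - 71526 * u ^ 8 - 610029 * u ^ 7 - 1615317 * u ^ 6
    + 4554960 * u ^ 5 - 1615317 * u ^ 4 - 610029 * u ^ 3 - 71526 * u ^ 2 - 227 * u + 17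

private lemma lemA : ∀ u : ℝ, 1 < u → u ≤ 75 → Pfun u < 0 := by
  intro u h1 h75
  have hs : (0:ℝ) ≤ u - 1 := by linarith
  have h75' : (0:ℝ) ≤ 75 - u := by linarith
  unfold Pfun
  nlinarith [mul_nonneg h75' (pow_nonneg hs 9), mul_nonneg h75' (pow_nonneg hs 8),
    mul_nonneg h75' (pow_nonneg hs 7), mul_nonneg h75' (pow_nonneg hs 6),
    pow_nonneg hs 6, pow_nonneg hs 5, pow_nonneg hs 4, pow_nonneg hs 3,
    pow_nonneg hs 2, hs]

private lemma lemMono : ∀ a b : ℝ, 75 ≤ a → a < b → Pfun a < Pfun b := by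
  intro a b ha hab
  have hx : (0:ℝ) ≤ a - 75 := by linarith
  have hxy : a - 75 ≤ b - 75 := by linarith
  unfold Pfun
  nlinarith [pow_le_pow_left₀ hx hxy 10, pow_le_pow_left₀ hx hxy 9,
    pow_le_pow_left₀ hx hxy 8, pow_le_pow_left₀ hx hxy 7, pow_le_pow_left₀ hx hxy 6,
    pow_le_pow_left₀ hx hxy 5, pow_le_pow_left₀ hx hxy 4, pow_le_pow_left₀ hx hxy 3,
    pow_le_pow_left₀ hx hxy 2, hab]

theorem p_unique_root :
    ∃! ustar : ℝ, 1 < ustar ∧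
      (17 * ustar ^ 10 - 227 * ustar ^ 9 - 71526 * ustar ^ 8 - 610029 * ustar ^ 7
        - 1615317 * ustar ^ 6 + 4554960 * ustar ^ 5 - 1615317 * ustar ^ 4 - 610029 * ustar ^ 3
        - 71526 * ustar ^ 2 - 227 * ustar + 17 = 0) ∧
      (∀ u : ℝ, 1 < u → u < ustar →
        17 * u ^ 10 - 227 * u ^ 9 - 71526 * u ^ 8 - 610029 * u ^ 7 - 1615317 * u ^ 6
          + 4554960 * u ^ 5 - 1615317 * u ^ 4 - 610029 * u ^ 3 - 71526 * u ^ 2 - 227 * u + 17 < 0) ∧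
      (∀ u : ℝ, ustar < u →
        0 < 17 * u ^ 10 - 227 * u ^ 9 - 71526 * u ^ 8 - 610029 * u ^ 7 - 1615317 * u ^ 6
          + 4554960 * u ^ 5 - 1615317 * u ^ 4 - 610029 * u ^ 3 - 71526 * u ^ 2 - 227 * u + 17) := by
  have hcont : ContinuousOn Pfun (Set.Icc (75:ℝ) 76) := by
    unfold Pfun; fun_prop
  have h75 : Pfun 75 < 0 := by unfold Pfun; norm_num
  have h76 : 0 < Pfun 76 := by unfold Pfun; norm_num
  have hmem : (0:ℝ) ∈ Set.Ioo (Pfun 75) (Pfun 76) := ⟨h75, h76⟩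
  obtain ⟨ustar, hu, hroot⟩ := intermediate_value_Ioo (by norm_num : (75:ℝ) ≤ 76) hcont hmem
  refine ⟨ustar, ⟨by linarith [hu.1], hroot, ?_, ?_⟩, ?_⟩
  · intro u h1 hlt
    show Pfun u < 0
    rcases le_or_gt u 75 with h | h
    · exact lemA u h1 h
    · calc Pfun u < Pfun ustar := lemMono u ustar h.le hlt
        _ = 0 := hroot
  · intro u hlt
    show 0 < Pfun u
    calc (0:ℝ) = Pfun ustar := hroot.symm
      _ < Pfun u := lemMono ustar u hu.1.le hlt
  · rintro y ⟨hy1, hyroot, hyneg, hypos⟩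
    by_contra hne
    rcases lt_or_gt_of_ne (Ne.symm hne) with h | h
    · have h1u : 1 < ustar := by linarith [hu.1]
      have := hyneg ustar h1u h
      rw [show (17 * ustar ^ 10 - 227 * ustar ^ 9 - 71526 * ustar ^ 8 - 610029 * ustar ^ 7
        - 1615317 * ustar ^ 6 + 4554960 * ustar ^ 5 - 1615317 * ustar ^ 4 - 610029 * ustar ^ 3
        - 71526 * ustar ^ 2 - 227 * ustar + 17) = Pfun ustar from rfl, hroot] at this
      exact lt_irrefl 0 this
    · have := hypos ustar h
      rw [show (17 * ustar ^ 10 - 227 * ustar ^ 9 - 71526 * ustar ^ 8 - 610029 * ustar ^ 7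
        - 1615317 * ustar ^ 6 + 4554960 * ustar ^ 5 - 1615317 * ustar ^ 4 - 610029 * ustar ^ 3
        - 71526 * ustar ^ 2 - 227 * ustar + 17) = Pfun ustar from rfl, hroot] at this
      exact lt_irrefl 0 this
end

section
/- For every real u > 1, H_{31}(u,u) = u·(17u¹⁰ + 25u⁹ - 41u⁸ - 493u⁷ + 1419u⁶ - 657u⁵ - 599u⁴ + 29u³ + 1316u² - 1880u + 1056) is strictly positive. -/
theorem H31_diag_pos (u : ℝ) (hu : 1 < u) :
    0 < u * (17 * u ^ 10 + 25 * u ^ 9 - 41 * u ^ 8 - 493 * u ^ 7 + 1419 * u ^ 6 - 657 * u ^ 5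
      - 599 * u ^ 4 + 29 * u ^ 3 + 1316 * u ^ 2 - 1880 * u + 1056) := by
  have ht : 0 < u - 1 := by linarith
  have hu0 : 0 < u := by linarith
  have key : 17 * u ^ 10 + 25 * u ^ 9 - 41 * u ^ 8 - 493 * u ^ 7 + 1419 * u ^ 6 - 657 * u ^ 5
      - 599 * u ^ 4 + 29 * u ^ 3 + 1316 * u ^ 2 - 1880 * u + 1056
      = 17 * (u-1)^10 + 195 * (u-1)^9 + 949 * (u-1)^8 + 2119 * (u-1)^7 + 2490 * (u-1)^6
        + 2642 * (u-1)^5 + 3996 * (u-1)^4 + 4032 * (u-1)^3 + 2688 * (u-1)^2 + 288 * (u-1)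
        + 192 := by ring
  rw [key]
  positivity
end
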